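/- Let A ⊆ B be a non-degenerate inclusion of C*-algebras and M ⊆ B a slice. Let N ⊆ M be a norm-closed linear subspace with A·N ⊆ N and N·A ⊆ N (a subslice). Then N equals the closed linear span of {m (n* n') : m ∈ M, n, n' ∈ N}, and also equals the closed linear span of {(n n'*) m : m ∈ M, n, n' ∈ N}. In other words, writing s(N) for the closed linear span of N*N and r(N) for the closed linear span of NN* (both closed two-sided ideals of A), one has N = closure(M·s(N)) = closure(r(N)·M). -/

import Mathlib

section SubsliceAux

variable {B : Type*} [NonUnitalCStarAlgebra B]

private lemma aux_ineq' {s : ℝ} (hs0 : 0 ≤ s) (hs1 : s ≤ 1) {k : ℕ} (hk : 1 ≤ k) :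
    s * (1 - s) ^ (2 * k) ≤ 1 / k := by
  have h1 : (1 - s) ^ (2 * k) ≤ (1 - s) ^ k :=
    pow_le_pow_of_le_one (by linarith) (by linarith) (by omega)
  have h2 : (1 + (k : ℝ) * s) * (1 - s) ^ k ≤ 1 := by
    calc (1 + (k : ℝ) * s) * (1 - s) ^ k ≤ (1 + s) ^ k * (1 - s) ^ k :=
          mul_le_mul_of_nonneg_right (one_add_mul_le_pow (by linarith) k)
            (pow_nonneg (by linarith) k)
      _ = ((1 + s) * (1 - s)) ^ k := (mul_pow _ _ _).symm
      _ ≤ 1 := pow_le_one₀ (by nlinarith) (by nlinarith)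
  have hden : (0:ℝ) < 1 + (k : ℝ) * s := by positivity
  have h3 : (1 - s) ^ k ≤ 1 / (1 + (k : ℝ) * s) := by
    rw [le_div_iff₀ hden]; nlinarith [pow_nonneg (show (0:ℝ) ≤ 1 - s by linarith) k]
  have h4 : s * (1 - s) ^ (2 * k) ≤ s * (1 / (1 + (k : ℝ) * s)) :=
    mul_le_mul_of_nonneg_left (h1.trans h3) hs0
  refine h4.trans ?_
  have hk' : (1:ℝ) ≤ (k : ℝ) := by exact_mod_cast hk
  rw [mul_one_div, div_le_div_iff₀ hden (by linarith)]
  nlinarith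

private lemma star_mem_span' {S : Set B} {z : B}
    (hz : z ∈ Submodule.span ℂ S) : star z ∈ Submodule.span ℂ (star '' S) := by
  induction hz using Submodule.span_induction with
  | mem y hy => exact Submodule.subset_span ⟨y, hy, rfl⟩
  | zero => simp
  | add a b _ _ ha hb => rw [star_add]; exact add_mem ha hb
  | smul c a _ h => rw [star_smul]; exact Submodule.smul_mem _ _ h

end SubsliceAux


private def mpow {B : Type*} [NonUnitalCStarAlgebra B] (x : B) : ℕ → B
  | 0 => x
  | (j+1) => x * mpow x j

set_option maxHeartbeats 1000000 in
private lemma core_approx {B : Type*} [NonUnitalCStarAlgebra B] (b : B) {ε : ℝ} (hε : 0 < ε) :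
    ∃ z ∈ Submodule.span ℂ (Set.range fun j : ℕ => b * mpow (star b * b) j),
      ‖b - z‖ < ε := by
  set x := star b * b with hxdef
  have hxsa : IsSelfAdjoint x := by
    rw [hxdef]; exact IsSelfAdjoint.star_mul_self b
  by_cases hx0 : ‖x‖ = 0
  · refine ⟨0, Submodule.zero_mem _, ?_⟩
    have hb0 : ‖b‖ * ‖b‖ = 0 := by
      rw [← CStarRing.norm_star_mul_self, ← hxdef, hx0]
    have : ‖b‖ = 0 := by nlinarith [norm_nonneg b]
    simpa [this] using hε
  have hR : 0 < ‖x‖ := lt_of_le_of_ne (norm_nonneg x) (Ne.symm hx0)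
  set R := ‖x‖ with hRdef
  -- spectrum bounds
  have hspec : ∀ t ∈ quasispectrum ℝ x, 0 ≤ t ∧ t ≤ R := by
    intro t ht
    constructor
    · rw [hxdef, Unitization.quasispectrum_eq_spectrum_inr' ℝ ℂ] at ht
      have := spectrum_star_mul_self_nonneg (A := Unitization ℂ B) (b := (b : Unitization ℂ B))
      apply this; simpa using ht
    · have := norm_apply_le_norm_cfcₙ (id : ℝ → ℝ) x ht
      rw [cfcₙ_id ℝ x] at this
      exact (le_abs_self t).trans this
  -- the approximating sequence
  set D : ℕ → B := fun k => cfcₙ (fun t : ℝ => 1 - (1 - t / R) ^ k) x with hDdef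
  have hD : ∀ k, D k = cfcₙ (fun t : ℝ => 1 - (1 - t / R) ^ k) x := fun k => rfl
  have hDrec : ∀ k, D (k + 1) = D k + R⁻¹ • x - R⁻¹ • (x * D k) := by
    intro k
    have h1 : (fun t : ℝ => 1 - (1 - t / R) ^ (k + 1))
        = fun t : ℝ => ((1 - (1 - t / R) ^ k) + R⁻¹ • t) - R⁻¹ • (t * (1 - (1 - t / R) ^ k)) := by
      funext t; simp only [smul_eq_mul]; ring
    rw [hD, hD]
    simp only [h1]
    rw [cfcₙ_sub (fun t : ℝ => (1 - (1 - t / R) ^ k) + R⁻¹ • t)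
        (fun t : ℝ => R⁻¹ • (t * (1 - (1 - t / R) ^ k))) x
        (by fun_prop) (by simp) (by fun_prop) (by simp),
      cfcₙ_add (fun t : ℝ => 1 - (1 - t / R) ^ k) (fun t : ℝ => R⁻¹ • t) x
        (by fun_prop) (by simp) (by fun_prop) (by simp),
      cfcₙ_smul_id R⁻¹ x,
      cfcₙ_smul R⁻¹ (fun t : ℝ => t * (1 - (1 - t / R) ^ k)) x (by fun_prop) (by simp),
      cfcₙ_mul (fun t : ℝ => t) (fun t : ℝ => 1 - (1 - t / R) ^ k) x
        (by fun_prop) (by simp) (by fun_prop) (by simp),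
      cfcₙ_id' ℝ x]
  have hDsa : ∀ k, IsSelfAdjoint (D k) := fun k => cfcₙ_predicate _ x
  -- membership of D k in the span of powers of x
  have hxmul : ∀ z ∈ Submodule.span ℂ (Set.range (mpow x)),
      x * z ∈ Submodule.span ℂ (Set.range (mpow x)) := by
    intro z hz
    induction hz using Submodule.span_induction with
    | mem y hy =>
        obtain ⟨j, rfl⟩ := hy
        exact Submodule.subset_span ⟨j + 1, rfl⟩
    | zero => simp
    | add a c _ _ ha hc => rw [mul_add]; exact add_mem ha hc
    | smul r a _ ha => rw [mul_smul_comm]; exact Submodule.smul_mem _ _ ha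
  have hDspan : ∀ k, D k ∈ Submodule.span ℂ (Set.range (mpow x)) := by
    intro k
    induction k with
    | zero =>
        have : D 0 = 0 := by
          rw [hD]
          simp only [pow_zero, sub_self]
          exact cfcₙ_const_zero ℝ x
        rw [this]; exact Submodule.zero_mem _
    | succ k ih =>
        rw [hDrec k]
        have hx : x ∈ Submodule.span ℂ (Set.range (mpow x)) :=
          Submodule.subset_span ⟨0, rfl⟩
        have h1 : R⁻¹ • x ∈ Submodule.span ℂ (Set.range (mpow x)) := by
          rw [← Complex.coe_smul]; exact Submodule.smul_mem _ _ hx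
        have h2 : R⁻¹ • (x * D k) ∈ Submodule.span ℂ (Set.range (mpow x)) := by
          rw [← Complex.coe_smul]; exact Submodule.smul_mem _ _ (hxmul _ ih)
        exact sub_mem (add_mem ih h1) h2
  have hbD' : ∀ z ∈ Submodule.span ℂ (Set.range (mpow x)),
      b * z ∈ Submodule.span ℂ (Set.range fun j : ℕ => b * mpow x j) := by
    intro z hz
    induction hz using Submodule.span_induction with
    | mem y hy =>
        obtain ⟨j, rfl⟩ := hy
        exact Submodule.subset_span ⟨j, rfl⟩
    | zero => rw [mul_zero]; exact Submodule.zero_mem _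
    | add a c _ _ ha hc => rw [mul_add]; exact add_mem ha hc
    | smul r a _ ha => rw [mul_smul_comm]; exact Submodule.smul_mem _ _ ha
  have hbD : ∀ k, b * D k ∈ Submodule.span ℂ (Set.range fun j : ℕ => b * mpow x j) :=
    fun k => hbD' _ (hDspan k)
  -- norm identity
  have hEq : ∀ k, ‖b - b * D k‖ * ‖b - b * D k‖
      = ‖x - x * D k - D k * x + D k * x * D k‖ := by
    intro k
    rw [← CStarRing.norm_star_mul_self]
    congr 1
    have hsD : star (D k) = D k := (hDsa k).star_eq
    rw [hxdef]
    simp only [star_sub, star_mul, hsD]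
    noncomm_ring
  -- identification with cfcₙ
  have hcfc : ∀ k, x - x * D k - D k * x + D k * x * D k
      = cfcₙ (fun t : ℝ => t * (1 - t / R) ^ (2 * k)) x := by
    intro k
    have h1 : cfcₙ (fun t : ℝ => t * (1 - t / R) ^ (2 * k)) x
        = cfcₙ (fun t : ℝ => ((t - t * (1 - (1 - t / R) ^ k)) - (1 - (1 - t / R) ^ k) * t)
            + ((1 - (1 - t / R) ^ k) * t) * (1 - (1 - t / R) ^ k)) x := by
      apply cfcₙ_congr
      intro t _
      ring
    rw [h1,
      cfcₙ_add (fun t : ℝ => (t - t * (1 - (1 - t / R) ^ k)) - (1 - (1 - t / R) ^ k) * t)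
        (fun t : ℝ => ((1 - (1 - t / R) ^ k) * t) * (1 - (1 - t / R) ^ k)) x
        (by fun_prop) (by simp) (by fun_prop) (by simp),
      cfcₙ_sub (fun t : ℝ => t - t * (1 - (1 - t / R) ^ k))
        (fun t : ℝ => (1 - (1 - t / R) ^ k) * t) x
        (by fun_prop) (by simp) (by fun_prop) (by simp),
      cfcₙ_sub (fun t : ℝ => t) (fun t : ℝ => t * (1 - (1 - t / R) ^ k)) x
        (by fun_prop) (by simp) (by fun_prop) (by simp),
      cfcₙ_mul (fun t : ℝ => t) (fun t : ℝ => 1 - (1 - t / R) ^ k) x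
        (by fun_prop) (by simp) (by fun_prop) (by simp),
      cfcₙ_mul (fun t : ℝ => (1 - (1 - t / R) ^ k) * t) (fun t : ℝ => 1 - (1 - t / R) ^ k) x
        (by fun_prop) (by simp) (by fun_prop) (by simp),
      cfcₙ_mul (fun t : ℝ => 1 - (1 - t / R) ^ k) (fun t : ℝ => t) x
        (by fun_prop) (by simp) (by fun_prop) (by simp),
      cfcₙ_id' ℝ x]
  -- the spectral bound
  have hbound : ∀ k : ℕ, 1 ≤ k →
      ‖cfcₙ (fun t : ℝ => t * (1 - t / R) ^ (2 * k)) x‖ ≤ R / k := by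
    intro k hk
    apply norm_cfcₙ_le
    intro t ht
    obtain ⟨ht0, htR⟩ := hspec t ht
    have hs0 : 0 ≤ t / R := div_nonneg ht0 hR.le
    have hs1 : t / R ≤ 1 := (div_le_one hR).mpr htR
    have hnn : 0 ≤ t * (1 - t / R) ^ (2 * k) :=
      mul_nonneg ht0 (pow_nonneg (by linarith) _)
    rw [Real.norm_eq_abs, abs_of_nonneg hnn]
    have key := aux_ineq' hs0 hs1 hk
    have ht' : t = R * (t / R) := by field_simp
    calc t * (1 - t / R) ^ (2 * k) = R * ((t / R) * (1 - t / R) ^ (2 * k)) := by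
          rw [← mul_assoc, mul_div_cancel₀ t hR.ne']
      _ ≤ R * (1 / k) := mul_le_mul_of_nonneg_left key hR.le
      _ = R / k := by rw [mul_one_div]
  -- choose k
  obtain ⟨k0, hk0⟩ := exists_nat_gt (R / (ε * ε))
  set k := k0 + 1 with hkdef
  have hkpos : (0:ℝ) < (k : ℝ) := by positivity
  have hklt : R / (k : ℝ) < ε * ε := by
    rw [div_lt_iff₀ hkpos]
    have h1 : R / (ε * ε) < (k : ℝ) := by
      refine hk0.trans_le ?_
      exact_mod_cast Nat.le_succ k0
    have hε2 : (0:ℝ) < ε * ε := by positivity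
    calc R = (R / (ε * ε)) * (ε * ε) := by field_simp
      _ < (k : ℝ) * (ε * ε) := by
          exact mul_lt_mul_of_pos_right h1 hε2
      _ = ε * ε * (k : ℝ) := by ring
  refine ⟨b * D k, hbD k, ?_⟩
  have h2 : ‖b - b * D k‖ * ‖b - b * D k‖ ≤ R / k := by
    rw [hEq k, hcfc k]
    exact hbound k (Nat.le_add_left 1 k0)
  nlinarith [norm_nonneg (b - b * D k), h2.trans_lt hklt, hε]

set_option maxHeartbeats 1000000 in
/-- For a non-degenerate inclusion `A ⊆ B` of C*-algebras, a slice `M ⊆ B` and a subslice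
`N ⊆ M`, the subslice `N` equals the closed linear span of `{m (n* n') : m ∈ M, n, n' ∈ N}`
and also equals the closed linear span of `{(n n'*) m : m ∈ M, n, n' ∈ N}`; that is,
`N = closure (M · s(N)) = closure (r(N) · M)`. -/
theorem subslice_eq_slice_mul_source {B : Type*} [NonUnitalCStarAlgebra B]
    (A : NonUnitalStarSubalgebra ℂ B) (hAc : IsClosed (A : Set B))
    (hnd : ∀ b : B, b ∈ closure {x : B | ∃ a ∈ A, x = a * b} ∧
      b ∈ closure {x : B | ∃ a ∈ A, x = b * a})
    (M : Submodule ℂ B) (hMc : IsClosed (M : Set B))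
    (hMnorm : ∀ m ∈ M, ∀ a ∈ A, star m * a * m ∈ A ∧ m * a * star m ∈ A)
    (hAM : ∀ a ∈ A, ∀ m ∈ M, a * m ∈ M)
    (hMA : ∀ m ∈ M, ∀ a ∈ A, m * a ∈ M)
    (N : Submodule ℂ B) (hNM : N ≤ M) (hNc : IsClosed (N : Set B))
    (hAN : ∀ a ∈ A, ∀ n ∈ N, a * n ∈ N)
    (hNA : ∀ n ∈ N, ∀ a ∈ A, n * a ∈ N) :
    (N : Set B) = closure (Submodule.span ℂ
        {x : B | ∃ m ∈ M, ∃ n ∈ N, ∃ n' ∈ N, x = m * (star n * n')} : Set B) ∧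
    (N : Set B) = closure (Submodule.span ℂ
        {x : B | ∃ m ∈ M, ∃ n ∈ N, ∃ n' ∈ N, x = (n * star n') * m} : Set B) := by
  -- polarization: `star m * a * m' ∈ A`
  have hpol1 : ∀ a ∈ A, ∀ m ∈ M, ∀ m' ∈ M, star m * a * m' ∈ A := by
    intro a ha m hm m' hm'
    have hP : star m' * a * m' ∈ A := (hMnorm m' hm' a ha).1
    have hS : star m * a * m ∈ A := (hMnorm m hm a ha).1
    have h1 : star m * a * m' + star m' * a * m ∈ A := by
      have hTT := (hMnorm _ (M.add_mem hm' hm) a ha).1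
      have e1 : star (m' + m) * a * (m' + m)
          = star m' * a * m' + (star m * a * m' + star m' * a * m) + star m * a * m := by
        simp only [star_add, add_mul, mul_add]; abel
      rw [e1] at hTT
      have h' := sub_mem (sub_mem hTT hP) hS
      convert h' using 1
      abel
    have h2 : (-Complex.I) • (star m * a * m') + Complex.I • (star m' * a * m) ∈ A := by
      have hTT := (hMnorm _ (M.add_mem hm' (M.smul_mem Complex.I hm)) a ha).1
      have e2 : star (m' + Complex.I • m) * a * (m' + Complex.I • m)
          = star m' * a * m' + ((-Complex.I) • (star m * a * m')
            + Complex.I • (star m' * a * m)) + star m * a * m := by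
        simp only [star_add, star_smul, RCLike.star_def, Complex.conj_I, add_mul, mul_add,
          smul_mul_assoc, mul_smul_comm, smul_add, smul_smul, neg_mul, mul_neg,
          Complex.I_mul_I, neg_neg, one_smul]
        abel
      rw [e2] at hTT
      have h' := sub_mem (sub_mem hTT hP) hS
      convert h' using 1
      abel
    have h3 : star m * a * m' - star m' * a * m ∈ A := by
      have h'' := SMulMemClass.smul_mem (S := NonUnitalStarSubalgebra ℂ B) Complex.I h2
      simp only [smul_add, smul_smul, neg_mul, mul_neg, Complex.I_mul_I, neg_neg, one_smul,
        neg_one_smul] at h''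
      rwa [← sub_eq_add_neg] at h''
    have key : star m * a * m' = (2:ℂ)⁻¹ • ((star m * a * m' + star m' * a * m)
        + (star m * a * m' - star m' * a * m)) := by
      module
    rw [key]
    exact SMulMemClass.smul_mem _ (add_mem h1 h3)
  -- polarization: `m * a * star m' ∈ A`
  have hpol2 : ∀ a ∈ A, ∀ m ∈ M, ∀ m' ∈ M, m * a * star m' ∈ A := by
    intro a ha m hm m' hm'
    have hP : m' * a * star m' ∈ A := (hMnorm m' hm' a ha).2
    have hS : m * a * star m ∈ A := (hMnorm m hm a ha).2
    have h1 : m * a * star m' + m' * a * star m ∈ A := by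
      have hTT := (hMnorm _ (M.add_mem hm' hm) a ha).2
      have e1 : (m' + m) * a * star (m' + m)
          = m' * a * star m' + (m * a * star m' + m' * a * star m) + m * a * star m := by
        simp only [star_add, add_mul, mul_add]; abel
      rw [e1] at hTT
      have h' := sub_mem (sub_mem hTT hP) hS
      convert h' using 1
      abel
    have h2 : Complex.I • (m * a * star m') + (-Complex.I) • (m' * a * star m) ∈ A := by
      have hTT := (hMnorm _ (M.add_mem hm' (M.smul_mem Complex.I hm)) a ha).2
      have e2 : (m' + Complex.I • m) * a * star (m' + Complex.I • m)
          = m' * a * star m' + (Complex.I • (m * a * star m')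
            + (-Complex.I) • (m' * a * star m)) + m * a * star m := by
        simp only [star_add, star_smul, RCLike.star_def, Complex.conj_I, add_mul, mul_add,
          smul_mul_assoc, mul_smul_comm, smul_add, smul_smul, neg_mul, mul_neg,
          Complex.I_mul_I, neg_neg, one_smul]
        abel
      rw [e2] at hTT
      have h' := sub_mem (sub_mem hTT hP) hS
      convert h' using 1
      abel
    have h3 : m * a * star m' - m' * a * star m ∈ A := by
      have h'' := SMulMemClass.smul_mem (S := NonUnitalStarSubalgebra ℂ B) (-Complex.I) h2
      simp only [smul_add, smul_smul, neg_mul, mul_neg, Complex.I_mul_I, neg_neg, one_smul,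
        neg_one_smul] at h''
      rwa [← sub_eq_add_neg] at h''
    have key : m * a * star m' = (2:ℂ)⁻¹ • ((m * a * star m' + m' * a * star m)
        + (m * a * star m' - m' * a * star m)) := by
      module
    rw [key]
    exact SMulMemClass.smul_mem _ (add_mem h1 h3)
  -- `star m * m' ∈ A` and `m * star m' ∈ A`
  have hMsM : ∀ m ∈ M, ∀ m' ∈ M, star m * m' ∈ A := by
    intro m hm m' hm'
    have h1 := (hnd m').1
    have hcont : Continuous fun y : B => star m * y := continuous_mul_left (star m)
    have hmem : star m * m' ∈ closure ((fun y : B => star m * y) ''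
        {x : B | ∃ a ∈ A, x = a * m'}) :=
      image_closure_subset_closure_image hcont (Set.mem_image_of_mem _ h1)
    have hsub : (fun y : B => star m * y) '' {x : B | ∃ a ∈ A, x = a * m'} ⊆ (A : Set B) := by
      rintro _ ⟨_, ⟨a, ha, rfl⟩, rfl⟩
      have := hpol1 a ha m hm m' hm'
      rwa [mul_assoc] at this
    exact (closure_minimal hsub hAc) hmem
  have hMMs : ∀ m ∈ M, ∀ m' ∈ M, m * star m' ∈ A := by
    intro m hm m' hm'
    have h1 := (hnd m).2
    have hcont : Continuous fun y : B => y * star m' := continuous_mul_right (star m')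
    have hmem : m * star m' ∈ closure ((fun y : B => y * star m') ''
        {x : B | ∃ a ∈ A, x = m * a}) :=
      image_closure_subset_closure_image hcont (Set.mem_image_of_mem _ h1)
    have hsub : (fun y : B => y * star m') '' {x : B | ∃ a ∈ A, x = m * a} ⊆ (A : Set B) := by
      rintro _ ⟨_, ⟨a, ha, rfl⟩, rfl⟩
      simpa using hpol2 a ha m hm m' hm'
    exact (closure_minimal hsub hAc) hmem
  -- the two generating sets
  set S1 : Set B := {x : B | ∃ m ∈ M, ∃ n ∈ N, ∃ n' ∈ N, x = m * (star n * n')} with hS1def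
  set S2 : Set B := {x : B | ∃ m ∈ M, ∃ n ∈ N, ∃ n' ∈ N, x = (n * star n') * m} with hS2def
  -- easy inclusions
  have hS1N : S1 ⊆ (N : Set B) := by
    rintro _ ⟨m, hm, n, hn, n', hn', rfl⟩
    rw [← mul_assoc]
    exact hAN _ (hMMs m hm n (hNM hn)) n' hn'
  have hS2N : S2 ⊆ (N : Set B) := by
    rintro _ ⟨m, hm, n, hn, n', hn', rfl⟩
    rw [mul_assoc]
    exact hNA n hn _ (hMsM n' (hNM hn') m hm)
  have hc1 : closure (Submodule.span ℂ S1 : Set B) ⊆ (N : Set B) :=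
    closure_minimal (by exact_mod_cast Submodule.span_le.mpr hS1N) hNc
  have hc2 : closure (Submodule.span ℂ S2 : Set B) ⊆ (N : Set B) :=
    closure_minimal (by exact_mod_cast Submodule.span_le.mpr hS2N) hNc
  constructor
  · apply Set.Subset.antisymm _ hc1
    intro n hn
    rw [Metric.mem_closure_iff]
    intro ε hε
    obtain ⟨z, hz, hznorm⟩ := core_approx n hε
    have hxA : star n * n ∈ A := hMsM n (hNM hn) n (hNM hn)
    have hmpowA : ∀ j, mpow (star n * n) j ∈ A := by
      intro j
      induction j with
      | zero => exact hxA
      | succ j ih => exact A.mul_mem hxA ih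
    have hgen : (Set.range fun j : ℕ => n * mpow (star n * n) j) ⊆ S1 := by
      rintro _ ⟨j, rfl⟩
      cases j with
      | zero => exact ⟨n, hNM hn, n, hn, n, hn, rfl⟩
      | succ j =>
          refine ⟨n, hNM hn, n, hn, n * mpow (star n * n) j, hNA n hn _ (hmpowA j), ?_⟩
          show n * ((star n * n) * mpow (star n * n) j) = n * (star n * (n * mpow (star n * n) j))
          rw [mul_assoc]
    have hz' : z ∈ Submodule.span ℂ S1 := Submodule.span_le.mpr
      (hgen.trans Submodule.subset_span) hz
    exact ⟨z, hz', by rwa [dist_eq_norm]⟩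
  · apply Set.Subset.antisymm _ hc2
    intro n hn
    rw [Metric.mem_closure_iff]
    intro ε hε
    obtain ⟨z, hz, hznorm⟩ := core_approx (star n) hε
    simp only [star_star] at hz hznorm
    have hyA : n * star n ∈ A := hMMs n (hNM hn) n (hNM hn)
    have hystar : star (n * star n) = n * star n := by simp [star_mul]
    have hmpowA : ∀ j, mpow (n * star n) j ∈ A := by
      intro j
      induction j with
      | zero => exact hyA
      | succ j ih => exact A.mul_mem hyA ih
    have hmpow_star : ∀ j, star (mpow (n * star n) j) = mpow (n * star n) j := by
      intro j
      have hcomm : ∀ i, mpow (n * star n) i * (n * star n) = (n * star n) * mpow (n * star n) i := by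
        intro i
        induction i with
        | zero => rfl
        | succ i ih =>
            show ((n * star n) * mpow (n * star n) i) * (n * star n) = _
            rw [mul_assoc, ih]
            rfl
      induction j with
      | zero => exact hystar
      | succ j ih =>
          show star ((n * star n) * mpow (n * star n) j) = _
          rw [star_mul, ih, hystar, hcomm j]
          rfl
    have hw := star_mem_span' hz
    rw [← norm_star (star n - z), star_sub, star_star] at hznorm
    have hgen : (star '' Set.range fun j : ℕ => star n * mpow (n * star n) j) ⊆ S2 := by
      rintro _ ⟨_, ⟨j, rfl⟩, rfl⟩
      rw [star_mul, star_star, hmpow_star j]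
      cases j with
      | zero => exact ⟨n, hNM hn, n, hn, n, hn, rfl⟩
      | succ j =>
          refine ⟨mpow (n * star n) j * n, hNM (hAN _ (hmpowA j) n hn), n, hn, n, hn, ?_⟩
          show ((n * star n) * mpow (n * star n) j) * n = (n * star n) * (mpow (n * star n) j * n)
          rw [mul_assoc]
    have hw' : star z ∈ Submodule.span ℂ S2 := Submodule.span_le.mpr
      (hgen.trans Submodule.subset_span) hw
    exact ⟨star z, hw', by rwa [dist_eq_norm]⟩
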